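/- Let Γ be a projective nonsingular irreducible complex curve of genus γ ≥ 3 which is Petri with respect to pencils. Then H^1(Γ, L^2(−x)) = 0 for every invertible sheaf L on Γ with h^0(L) ≥ 2 and for every point x ∈ Γ. -/

import Mathlib

/-!
We formalize statements of Bruno–Sernesi, "The symmetric square of a curve and
the Petri map".

A smooth projective irreducible complex curve `Γ` is presented through its
field of rational functions `K` (a `ℂ`-algebra which is a field), the divisor
map `div : K → Div(Γ)`, a chosen canonical divisor, and the Riemann–Roch spaces
`RR D = H⁰(Γ, O(D)) ⊆ K` of divisors.  Divisors on `Γ` are finitely supported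
`ℤ`-valued functions on the set of (closed) points.  Invertible sheaves are
represented by divisors (every line bundle is `O(D)` for some divisor `D`, and
all the notions below are invariant under linear equivalence).
-/

open Module Function
open scoped TensorProduct

noncomputable section

/-- The degree of a divisor. -/
def divDegree {Point : Type} (D : Point →₀ ℤ) : ℤ := D.sum fun _ n => n

/-- A smooth projective irreducible curve over `ℂ`, presented via its function
field, divisors of rational functions, a canonical divisor and its
Riemann–Roch spaces. -/
structure CurveData (Point K : Type) [Field K] [Algebra ℂ K] : Type where
  /-- the genus of the curve -/
  genus : ℕ
  /-- the divisor of a (nonzero) rational function -/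
  div : K → (Point →₀ ℤ)
  /-- a canonical divisor, i.e. the divisor of a rational 1-form; `O(canonical) = ω_Γ` -/
  canonical : Point →₀ ℤ
  /-- the Riemann–Roch space `H⁰(Γ, O(D)) ⊆ K` of a divisor `D` -/
  RR : (Point →₀ ℤ) → Submodule ℂ K
  mem_RR : ∀ (D : Point →₀ ℤ) (f : K), f ∈ RR D ↔ f = 0 ∨ 0 ≤ D + div f
  div_mul : ∀ f g : K, f ≠ 0 → g ≠ 0 → div (f * g) = div f + div g
  div_algebraMap : ∀ c : ℂ, c ≠ 0 → div ((algebraMap ℂ K) c) = 0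
  finiteDimensional_RR : ∀ D, FiniteDimensional ℂ (RR D)
  degree_div : ∀ f : K, f ≠ 0 → divDegree (div f) = 0
  degree_canonical : divDegree canonical = 2 * (genus : ℤ) - 2
  /-- the Riemann–Roch theorem: `h⁰(D) - h⁰(K - D) = deg D + 1 - γ` -/
  riemannRoch : ∀ D : Point →₀ ℤ,
    (finrank ℂ (RR D) : ℤ) - (finrank ℂ (RR (canonical - D)) : ℤ)
      = divDegree D + 1 - (genus : ℤ)

namespace CurveData

variable {Point K : Type} [Field K] [Algebra ℂ K]

/-- The divisor given by a single point. -/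
def pt (x : Point) : Point →₀ ℤ := Finsupp.single x 1

/-- The multiplication map `V ⊗ W → K` induced by the multiplication of the
function field on two subspaces `V, W ⊆ K`.  For `V ⊆ H⁰(L)` and
`W ⊆ H⁰(M)` it takes values in `H⁰(LM) ⊆ K`, so its injectivity is equivalent
to that of the multiplication map `V ⊗ W → H⁰(LM)`. -/
def mulMap (V W : Submodule ℂ K) : (V ⊗[ℂ] W) →ₗ[ℂ] K :=
  TensorProduct.lift (((LinearMap.mul ℂ K).comp V.subtype).compl₂ W.subtype)

variable (C : CurveData Point K)

/-- `h⁰(D) = dim H⁰(Γ, O(D))`. -/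
def h0 (D : Point →₀ ℤ) : ℕ := finrank ℂ (C.RR D)

/-- `h¹(D) = dim H¹(Γ, O(D))`, computed via Serre duality as `h⁰(K - D)`. -/
def h1 (D : Point →₀ ℤ) : ℕ := finrank ℂ (C.RR (C.canonical - D))

/-- `(O(D), V)` is a linear pencil (a `g¹_n` with `n = deg D`): `V` is a
2-dimensional subspace of `H⁰(O(D))`. -/
def IsPencil (D : Point →₀ ℤ) (V : Submodule ℂ K) : Prop :=
  V ≤ C.RR D ∧ finrank ℂ V = 2

/-- The Petri map `μ₀(L,V) : V ⊗ H⁰(ω_Γ L⁻¹) → H⁰(ω_Γ)` of the pencil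
`(L,V) = (O(D), V)`, viewed as a map into `K`; its injectivity is equivalent to
the injectivity of the Petri map. -/
def petriMap (D : Point →₀ ℤ) (V : Submodule ℂ K) :
    (V ⊗[ℂ] (C.RR (C.canonical - D))) →ₗ[ℂ] K :=
  mulMap V (C.RR (C.canonical - D))

/-- `Γ` is Petri with respect to pencils: the Petri map of every linear pencil
(of any degree) is injective. -/
def PetriWrtPencils : Prop :=
  ∀ (D : Point →₀ ℤ) (V : Submodule ℂ K), C.IsPencil D V →
    Function.Injective (C.petriMap D V)

/-- `x` is a base point of the linear series `(O(D), V)`. -/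
def IsBasePoint (D : Point →₀ ℤ) (V : Submodule ℂ K) (x : Point) : Prop :=
  V ≤ C.RR (D - pt x)

/-- `(O(D), V)` is base-point free. -/
def BasePointFree (D : Point →₀ ℤ) (V : Submodule ℂ K) : Prop :=
  ∀ x : Point, ¬ C.IsBasePoint D V x

/-- `B` is the fixed divisor of the linear series `(O(D), V)`: the largest
effective divisor contained in all divisors of the series. -/
def IsFixedDivisor (D : Point →₀ ℤ) (V : Submodule ℂ K) (B : Point →₀ ℤ) : Prop :=
  0 ≤ B ∧ V ≤ C.RR (D - B) ∧ ∀ B' : Point →₀ ℤ, 0 ≤ B' → V ≤ C.RR (D - B') → B' ≤ B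

/-- `(O(D), V)` is complete, i.e. `V = H⁰(O(D))`. -/
def IsComplete (D : Point →₀ ℤ) (V : Submodule ℂ K) : Prop :=
  V = C.RR D

/-- The pencil `(O(D), V)` is neutral with respect to `x + y ∈ Γ₂`, i.e.
`V(-x-y) ≠ 0`. -/
def IsNeutral (D : Point →₀ ℤ) (V : Submodule ℂ K) (x y : Point) : Prop :=
  V ⊓ C.RR (D - pt x - pt y) ≠ ⊥

/-- The pencil `(O(D), V)` has only simple ramification: every divisor of the
pencil contains each point with multiplicity at most 2, and contains at most
one double point. -/
def SimpleRamification (D : Point →₀ ℤ) (V : Submodule ℂ K) : Prop :=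
  ∀ f : K, f ∈ V → f ≠ 0 →
    (∀ z : Point, (D + C.div f) z ≤ 2) ∧ {z : Point | (D + C.div f) z = 2}.Subsingleton

end CurveData

end


noncomputable section Aux

namespace PetriAux

open CurveData

lemma divDegree_add {Point : Type} (A B : Point →₀ ℤ) :
    divDegree (A + B) = divDegree A + divDegree B :=
  Finsupp.sum_add_index' (fun _ => rfl) (fun _ _ _ => rfl)

lemma divDegree_neg {Point : Type} (A : Point →₀ ℤ) : divDegree (-A) = -divDegree A := by
  have h := divDegree_add A (-A)
  simp only [add_neg_cancel] at h
  have h0 : divDegree (0 : Point →₀ ℤ) = 0 := Finsupp.sum_zero_index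
  omega

lemma divDegree_sub {Point : Type} (A B : Point →₀ ℤ) :
    divDegree (A - B) = divDegree A - divDegree B := by
  rw [sub_eq_add_neg, divDegree_add, divDegree_neg]; ring

lemma divDegree_pt {Point : Type} (x : Point) : divDegree (pt x) = 1 :=
  Finsupp.sum_single_index rfl

lemma pt_nonneg {Point : Type} (x : Point) : (0 : Point →₀ ℤ) ≤ pt x :=
  Finsupp.single_nonneg.mpr one_pos.le

variable {Point K : Type} [Field K] [Algebra ℂ K]

open Module

lemma finrank_le_of_le {p q : Submodule ℂ K} [FiniteDimensional ℂ q] (h : p ≤ q) :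
    finrank ℂ p ≤ finrank ℂ q := by
  rw [← LinearEquiv.finrank_eq (Submodule.comapSubtypeEquivOfLe h)]
  exact Submodule.finrank_le _

lemma mulMap_tmul (V W : Submodule ℂ K) (v : V) (w : W) :
    mulMap V W (v ⊗ₜ[ℂ] w) = (v : K) * (w : K) := rfl

lemma tensor_ne_zero (V W : Submodule ℂ K) (hV : finrank ℂ V = 2)
    (v : Fin 2 → V) (hv : LinearIndependent ℂ v) (a b : W) (ha : a ≠ 0) :
    (v 0) ⊗ₜ[ℂ] a - (v 1) ⊗ₜ[ℂ] b ≠ 0 := by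
  intro h
  set B := basisOfLinearIndependentOfCardEqFinrank hv (by simp [hV]) with hB
  have hBv : ⇑B = v := coe_basisOfLinearIndependentOfCardEqFinrank hv _
  set L : (V ⊗[ℂ] W) →ₗ[ℂ] W :=
    (TensorProduct.lid ℂ W).toLinearMap.comp (LinearMap.rTensor W (B.coord 0)) with hL
  have h0 : L ((v 0) ⊗ₜ[ℂ] a - (v 1) ⊗ₜ[ℂ] b) = 0 := by rw [h, map_zero]
  have hc0 : B.coord 0 (v 0) = 1 := by
    rw [← hBv]; simp [Basis.coord_apply, Basis.repr_self]
  have hc1 : B.coord 0 (v 1) = 0 := by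
    rw [← hBv]; simp [Basis.coord_apply, Basis.repr_self]
  rw [hL] at h0
  simp only [map_sub, LinearMap.comp_apply, LinearMap.rTensor_tmul,
    LinearEquiv.coe_coe, TensorProduct.lid_tmul, hc0, hc1, one_smul, zero_smul,
    sub_zero] at h0
  exact ha h0

variable (C : CurveData Point K)

lemma RR_mono {A B : Point →₀ ℤ} (h : A ≤ B) : C.RR A ≤ C.RR B := by
  intro f hf
  rcases (C.mem_RR A f).1 hf with h0 | hpos
  · exact (C.mem_RR B f).2 (Or.inl h0)
  · exact (C.mem_RR B f).2 (Or.inr (hpos.trans (add_le_add_left h _)))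

lemma exists_pair (W : Submodule ℂ K) [FiniteDimensional ℂ W]
    (hW : 2 ≤ finrank ℂ W) :
    ∃ s t : K, s ∈ W ∧ t ∈ W ∧ LinearIndependent ℂ ![s, t] := by
  obtain ⟨g, hg⟩ := exists_linearIndependent_of_le_finrank hW
  refine ⟨(g 0 : K), (g 1 : K), (g 0).2, (g 1).2, ?_⟩
  have h2 := hg.map' W.subtype (Submodule.ker_subtype W)
  have he : (W.subtype ∘ g) = ![((g 0 : K)), ((g 1 : K))] := by
    funext i; fin_cases i <;> rfl
  rwa [he] at h2

lemma petri_contra (hPetri : C.PetriWrtPencils) (A : Point →₀ ℤ) (s t f : K)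
    (hst : LinearIndependent ℂ ![s, t])
    (hs : s ∈ C.RR A) (ht : t ∈ C.RR A)
    (hsf : s * f ∈ C.RR (C.canonical - A)) (htf : t * f ∈ C.RR (C.canonical - A))
    (hf : f ≠ 0) : False := by
  set V : Submodule ℂ K := Submodule.span ℂ (Set.range ![s, t]) with hVdef
  have hle : V ≤ C.RR A := by
    rw [hVdef, Submodule.span_le]
    rintro _ ⟨i, rfl⟩
    fin_cases i <;> simpa
  have h2 : finrank ℂ V = 2 := by
    rw [hVdef, finrank_span_eq_card hst]; simp
  have hsV : s ∈ V := Submodule.subset_span ⟨0, rfl⟩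
  have htV : t ∈ V := Submodule.subset_span ⟨1, rfl⟩
  set v : Fin 2 → V := ![⟨s, hsV⟩, ⟨t, htV⟩] with hvdef
  have hv : LinearIndependent ℂ v := by
    apply LinearIndependent.of_comp V.subtype
    have he : (V.subtype ∘ v) = ![s, t] := by funext i; fin_cases i <;> rfl
    rwa [he]
  set W : Submodule ℂ K := C.RR (C.canonical - A) with hWdef
  set a : W := ⟨t * f, htf⟩ with hadef
  set b : W := ⟨s * f, hsf⟩ with hbdef
  set ξ : V ⊗[ℂ] W := (v 0) ⊗ₜ[ℂ] a - (v 1) ⊗ₜ[ℂ] b with hξdef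
  have ht0 : t ≠ 0 := by simpa using hst.ne_zero 1
  have hmap : C.petriMap A V ξ = 0 := by
    have e0 : (v 0 : K) = s := rfl
    have e1 : (v 1 : K) = t := rfl
    rw [hξdef, map_sub]
    show mulMap V W _ - mulMap V W _ = 0
    rw [mulMap_tmul, mulMap_tmul, e0, e1]
    show s * (t * f) - t * (s * f) = 0
    ring
  have hinj := hPetri A V ⟨hle, h2⟩
  have hz : ξ = 0 := hinj (by rw [hmap, map_zero])
  exact tensor_ne_zero V W h2 v hv a b
    (fun h => (mul_ne_zero ht0 hf) (by simpa [hadef, Subtype.ext_iff] using h)) hz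

end PetriAux

end Aux

/-- Proposition 2.1(ii).  Let `Γ` be a projective nonsingular
irreducible complex curve of genus `γ ≥ 3` which is Petri with respect to
pencils.  Then `H¹(Γ, L²(-x)) = 0` for every invertible sheaf `L` on `Γ` with
`h⁰(L) ≥ 2` and every point `x ∈ Γ`.  Here `L = O(D)`, so `L²(-x) = O(2D - x)`
and `h¹` is computed by Serre duality. -/
theorem h1_square_minus_point_eq_zero_of_petriWrtPencils
    (Point K : Type) [Field K] [Algebra ℂ K] (C : CurveData Point K)
    (hγ : 3 ≤ C.genus) (hPetri : C.PetriWrtPencils)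
    (D : Point →₀ ℤ) (hD : 2 ≤ C.h0 D) (x : Point) :
    C.h1 (2 • D - CurveData.pt x) = 0 := by
  classical
  have key : C.RR (C.canonical - (2 • D - CurveData.pt x)) = ⊥ := by
    rw [Submodule.eq_bot_iff]
    intro f hfmem
    by_contra hf
    have hfd : 0 ≤ C.canonical - (2 • D - CurveData.pt x) + C.div f :=
      ((C.mem_RR _ f).1 hfmem).resolve_left hf
    haveI := C.finiteDimensional_RR (D - CurveData.pt x)
    haveI := C.finiteDimensional_RR D
    haveI := C.finiteDimensional_RR (C.canonical - (D - CurveData.pt x))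
    haveI := C.finiteDimensional_RR (C.canonical - D)
    by_cases hA : 2 ≤ Module.finrank ℂ (C.RR (D - CurveData.pt x))
    · -- Case A: the pencil can be chosen with base point `x`.
      obtain ⟨s, t, hs, ht, hst⟩ := PetriAux.exists_pair (C.RR (D - CurveData.pt x)) hA
      have hs0 : s ≠ 0 := by simpa using hst.ne_zero 0
      have ht0 : t ≠ 0 := by simpa using hst.ne_zero 1
      have hmem : ∀ u : K, u ≠ 0 → u ∈ C.RR (D - CurveData.pt x) →
          u * f ∈ C.RR (C.canonical - D) := by
        intro u hu humem
        have hud : 0 ≤ D - CurveData.pt x + C.div u :=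
          ((C.mem_RR _ u).1 humem).resolve_left hu
        refine (C.mem_RR _ _).2 (Or.inr ?_)
        rw [C.div_mul u f hu hf]
        have hsum := add_nonneg hud hfd
        have heq : D - CurveData.pt x + C.div u
            + (C.canonical - (2 • D - CurveData.pt x) + C.div f)
            = C.canonical - D + (C.div u + C.div f) := by
          rw [two_nsmul]; abel
        rw [heq] at hsum
        exact hsum
      have hDx_le : D - CurveData.pt x ≤ D := by
        simpa using sub_le_self D (PetriAux.pt_nonneg x)
      exact PetriAux.petri_contra C hPetri D s t f hst
        (PetriAux.RR_mono C hDx_le hs) (PetriAux.RR_mono C hDx_le ht)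
        (hmem s hs0 hs) (hmem t ht0 ht) hf
    · -- Case B: `h⁰(D - x) ≤ 1`, hence `h⁰(D) = 2`, `h⁰(D - x) = 1`, and by
      -- Riemann-Roch `RR(K - (D - x)) = RR(K - D)`.
      push_neg at hA
      have hDx_le : D - CurveData.pt x ≤ D := by
        simpa using sub_le_self D (PetriAux.pt_nonneg x)
      have hKle : C.canonical - D ≤ C.canonical - (D - CurveData.pt x) :=
        sub_le_sub_left hDx_le _
      have hmono : Module.finrank ℂ (C.RR (C.canonical - D))
          ≤ Module.finrank ℂ (C.RR (C.canonical - (D - CurveData.pt x))) :=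
        PetriAux.finrank_le_of_le (PetriAux.RR_mono C hKle)
      have rr1 := C.riemannRoch D
      have rr2 := C.riemannRoch (D - CurveData.pt x)
      rw [PetriAux.divDegree_sub, PetriAux.divDegree_pt] at rr2
      have hfr : Module.finrank ℂ (C.RR (C.canonical - D))
          = Module.finrank ℂ (C.RR (C.canonical - (D - CurveData.pt x))) := by
        have hD' : 2 ≤ Module.finrank ℂ (C.RR D) := hD
        omega
      have hEq : C.RR (C.canonical - D) = C.RR (C.canonical - (D - CurveData.pt x)) :=
        Submodule.eq_of_le_of_finrank_eq (PetriAux.RR_mono C hKle) hfr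
      obtain ⟨s, t, hs, ht, hst⟩ := PetriAux.exists_pair (C.RR D) hD
      have hs0 : s ≠ 0 := by simpa using hst.ne_zero 0
      have ht0 : t ≠ 0 := by simpa using hst.ne_zero 1
      have hmem : ∀ u : K, u ≠ 0 → u ∈ C.RR D → u * f ∈ C.RR (C.canonical - D) := by
        intro u hu humem
        have hud : 0 ≤ D + C.div u := ((C.mem_RR _ u).1 humem).resolve_left hu
        rw [hEq]
        refine (C.mem_RR _ _).2 (Or.inr ?_)
        rw [C.div_mul u f hu hf]
        have hsum := add_nonneg hud hfd
        have heq : D + C.div u + (C.canonical - (2 • D - CurveData.pt x) + C.div f)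
            = C.canonical - (D - CurveData.pt x) + (C.div u + C.div f) := by
          rw [two_nsmul]; abel
        rw [heq] at hsum
        exact hsum
      exact PetriAux.petri_contra C hPetri D s t f hst hs ht
        (hmem s hs0 hs) (hmem t ht0 ht) hf
  show Module.finrank ℂ (C.RR (C.canonical - (2 • D - CurveData.pt x))) = 0
  rw [key]
  exact finrank_bot ℂ K
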